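/- Let B be a skew brace of nilpotent type (with (B,+) nilpotent of class m) such that B³ = 0 and the multiplicative group (B,·) is abelian. Then B^{(2+m+1)} = 0. -/

import Mathlib

/-- A (left) skew brace: a set with two group structures `(B,+)` and `(B,·)`
satisfying `a·(b+c) = a·b - a + a·c`. -/
class SkewBrace (B : Type*) extends AddGroup B, Group B where
  mul_add_compat : ∀ a b c : B, a * (b + c) = a * b - a + a * c

namespace SkewBrace

variable {B : Type*} [SkewBrace B]

/-- The star product `a ∗ b = -a + a·b - b`. -/
def star (a b : B) : B := -a + a * b - b

/-- For subsets `X, Y ⊆ B`, `X ∗ Y` is the additive subgroup generated by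
all `x ∗ y` with `x ∈ X`, `y ∈ Y`. -/
def starSet (X Y : Set B) : AddSubgroup B :=
  AddSubgroup.closure (Set.image2 star X Y)

/-- The left series, indexed so that `leftSeries B n = B^{n+1}`:
`leftSeries B 0 = B¹ = B` and `leftSeries B (n+1) = B ∗ leftSeries B n`. -/
def leftSeries (B : Type*) [SkewBrace B] : ℕ → AddSubgroup B
  | 0 => ⊤
  | n + 1 => starSet Set.univ (leftSeries B n)

/-- The right series, indexed so that `rightSeries B n = B^{(n+1)}`:
`rightSeries B 0 = B^{(1)} = B` and `rightSeries B (n+1) = (rightSeries B n) ∗ B`. -/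
def rightSeries (B : Type*) [SkewBrace B] : ℕ → AddSubgroup B
  | 0 => ⊤
  | n + 1 => starSet (rightSeries B n : Set B) Set.univ

end SkewBrace

namespace SkewBraceAux

open SkewBrace

variable {B : Type*} [SkewBrace B]

lemma mul_zero' (a : B) : a * 0 = a := by
  have h := SkewBrace.mul_add_compat a 0 0
  rw [add_zero] at h
  have h2 : a * 0 - a + a * 0 = 0 + a * 0 := (h.symm.trans (zero_add _).symm)
  have h3 := add_right_cancel h2
  exact sub_eq_zero.mp h3

lemma zero_eq_one : (0 : B) = 1 := by
  have := mul_zero' (1 : B)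
  rwa [one_mul] at this

lemma star_zero_left (b : B) : star (0 : B) b = 0 := by
  have h0 : (0 : B) * b = b := by rw [zero_eq_one, one_mul]
  rw [SkewBrace.star, h0, neg_zero, zero_add, sub_self]

/-- generators of any `starSet` lie in `B² = leftSeries B 1`. -/
lemma star_mem_L1 (a b : B) : star a b ∈ leftSeries B 1 := by
  show star a b ∈ starSet Set.univ ((⊤ : AddSubgroup B) : Set B)
  exact AddSubgroup.subset_closure ⟨a, trivial, b, by simp, rfl⟩

lemma rightSeries_succ_le_L1 (n : ℕ) : rightSeries B (n + 1) ≤ leftSeries B 1 := by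
  show starSet _ _ ≤ _
  rw [starSet]
  apply AddSubgroup.closure_le _ |>.mpr
  rintro _ ⟨a, -, b, -, rfl⟩
  exact star_mem_L1 a b

end SkewBraceAux

open scoped commutatorElement

open SkewBrace SkewBraceAux in
/-- If `B` is of nilpotent type with `(B,+)` of class `m`, `B³ = 0` and `(B,·)` is abelian,
then `B^{(2+m+1)} = 0`, i.e. `rightSeries B (2 + m) = ⊥`. -/
theorem right_nilpotent_of_abelian_mul (B : Type*) [SkewBrace B] (m : ℕ)
    [Group.IsNilpotent (Multiplicative B)]
    (hm : Group.nilpotencyClass (Multiplicative B) = m)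
    (h3 : leftSeries B 2 = ⊥)
    (hcomm : ∀ a b : B, a * b = b * a) :
    rightSeries B (2 + m) = ⊥ := by
  -- for x ∈ B², b * x = b + x
  have hstar0 : ∀ (b x : B), x ∈ leftSeries B 1 → star b x = 0 := by
    intro b x hx
    have : star b x ∈ leftSeries B 2 :=
      AddSubgroup.subset_closure ⟨b, trivial, x, hx, rfl⟩
    rwa [h3, AddSubgroup.mem_bot] at this
  have hmul : ∀ (b x : B), x ∈ leftSeries B 1 → b * x = b + x := by
    intro b x hx
    have h := hstar0 b x hx
    rw [SkewBrace.star, sub_eq_zero] at h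
    calc b * x = b + (-b + b * x) := by rw [← add_assoc]; simp
    _ = b + x := by rw [h]
  -- star formula for x ∈ B²
  have hform : ∀ (x b : B), x ∈ leftSeries B 1 → star x b = -x + b + x - b := by
    intro x b hx
    rw [SkewBrace.star, hcomm, hmul b x hx, ← add_assoc]
  -- key induction
  have key : ∀ k : ℕ, rightSeries B (k + 1) ≤
      Subgroup.toAddSubgroup' (Subgroup.lowerCentralSeries (⊤ : Subgroup (Multiplicative B)) k) := by
    intro k
    induction k with
    | zero => intro x _; exact Subgroup.mem_top _
    | succ k ih =>
      show starSet _ _ ≤ _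
      apply AddSubgroup.closure_le _ |>.mpr
      rintro _ ⟨x, hx, b, -, rfl⟩
      have hx1 : x ∈ leftSeries B 1 := rightSeries_succ_le_L1 k hx
      have hxk : Multiplicative.ofAdd x ∈ Subgroup.lowerCentralSeries (⊤ : Subgroup (Multiplicative B)) k := ih hx
      show Multiplicative.ofAdd (star x b) ∈ Subgroup.lowerCentralSeries (⊤ : Subgroup (Multiplicative B)) (k + 1)
      rw [lowerCentralSeries_succ]
      have : Multiplicative.ofAdd (star x b) =
          ⁅(Multiplicative.ofAdd x)⁻¹, Multiplicative.ofAdd b⁆ := by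
        rw [hform x b hx1, commutatorElement_def, inv_inv, sub_eq_add_neg]
        rfl
      rw [this]
      exact Subgroup.commutator_mem_commutator (inv_mem hxk) (Subgroup.mem_top _)
  have hbot : Subgroup.lowerCentralSeries (⊤ : Subgroup (Multiplicative B)) m = ⊥ := by
    rw [← hm]; exact lowerCentralSeries_nilpotencyClass
  have hRm : rightSeries B (m + 1) = ⊥ := by
    apply le_bot_iff.mp
    intro x hx
    have := key m hx
    rw [hbot] at this
    exact this
  rw [show 2 + m = (m + 1) + 1 by omega]
  show starSet _ _ = ⊥
  apply le_bot_iff.mp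
  apply AddSubgroup.closure_le _ |>.mpr
  rintro _ ⟨x, hx, b, -, rfl⟩
  rw [hRm, AddSubgroup.coe_bot, Set.mem_singleton_iff] at hx
  subst hx
  simp [star_zero_left]
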